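/- Uniqueness lemma for jets: Suppose k is a nonnegative integer, P : ℝⁿ → ℝ is a polynomial function, Δ is a sequentially dense subset of 𝒟(ℝⁿ, ℝ), a ∈ ℝⁿ, and lim_{r→0+} r^{−k−n} ∫ φ(r⁻¹(x−a)) P(x) dℒⁿx = 0 for every φ ∈ Δ. Then D^m P(a) = 0 for m = 0, …, k. -/

import Mathlib

open MeasureTheory Filter Metric Topology

noncomputable section

/-- Euclidean space `ℝⁿ`. -/
abbrev Euc (n : ℕ) : Type := EuclideanSpace ℝ (Fin n)

variable {n : ℕ} {Y Z : Type*}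

section Defs
variable [NormedAddCommGroup Y] [NormedSpace ℝ Y] [NormedAddCommGroup Z] [NormedSpace ℝ Z]

/-- `φ ∈ 𝒟(ℝⁿ, Y)`: smooth compactly supported. -/
def IsTest (φ : Euc n → Y) : Prop :=
  ContDiff ℝ (⊤ : ℕ∞) φ ∧ HasCompactSupport φ

/-- `sup_x ‖D^i φ(x)‖`. -/
def supDer (i : ℕ) (φ : Euc n → Y) : ℝ :=
  ⨆ x, ‖iteratedFDeriv ℝ i φ x‖

/-- `sup { ‖D^m φ(x)‖ : x, 0 ≤ m ≤ i }`. -/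
def supDers (i : ℕ) (φ : Euc n → Y) : ℝ :=
  ⨆ m : Fin (i + 1), supDer (m : ℕ) φ

/-- A distribution `T ∈ 𝒟′(ℝⁿ, Y)`: a real-linear functional on test functions with,
on each compact `K`, a bound by some seminorm `ν_K^i`. -/
structure IsDistribution (n : ℕ) (Y : Type*) [NormedAddCommGroup Y] [NormedSpace ℝ Y]
    (T : (Euc n → Y) → ℝ) : Prop where
  map_add : ∀ φ ψ : Euc n → Y, IsTest φ → IsTest ψ → T (φ + ψ) = T φ + T ψ
  map_smul : ∀ (c : ℝ) (φ : Euc n → Y), IsTest φ → T (c • φ) = c * T φ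
  bound : ∀ K : Set (Euc n), IsCompact K → ∃ (i : ℕ) (M : ℝ), 0 ≤ M ∧
    ∀ φ : Euc n → Y, IsTest φ → tsupport φ ⊆ K → |T φ| ≤ M * supDers i φ

/-- First-order partial derivative in the `j`-th coordinate direction. -/
def pderiv1 (j : Fin n) (φ : Euc n → Y) : Euc n → Y :=
  fun x => fderiv ℝ φ x (EuclideanSpace.single j 1)

/-- Iterated partial derivatives along a list of coordinate directions. -/
def pderivList : List (Fin n) → (Euc n → Y) → Euc n → Y
  | [], φ => φ
  | j :: l, φ => pderiv1 j (pderivList l φ)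

/-- The list of directions encoded by a multi-index `ξ : Fin n → ℕ`. -/
def multiIndexList (ξ : Fin n → ℕ) : List (Fin n) :=
  (List.finRange n).foldr (fun j l => List.replicate (ξ j) j ++ l) []

/-- `∂^ξ φ` for a multi-index `ξ`. -/
def pderivMulti (ξ : Fin n → ℕ) (φ : Euc n → Y) : Euc n → Y :=
  pderivList (multiIndexList ξ) φ

/-- Distributional partial derivative `D^ξ T`, `(D^ξ T)(φ) = (−1)^{|ξ|} T(∂^ξ φ)`. -/
def Der (ξ : Fin n → ℕ) (T : (Euc n → Y) → ℝ) : (Euc n → Y) → ℝ :=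
  fun φ => (-1 : ℝ) ^ (∑ j, ξ j) * T (pderivMulti ξ φ)

/-- A polynomial function of degree at most `k` (the zero function if `k < 0`):
`P x = Σ_{m=0}^{k} ψ_m (x, …, x)` for continuous `m`-linear maps `ψ_m`. -/
def IsPolyDegLE (k : ℤ) (P : Euc n → Z) : Prop :=
  (k < 0 ∧ P = 0) ∨
  (0 ≤ k ∧ ∃ ψ : (m : Fin (k.toNat + 1)) →
      ContinuousMultilinearMap ℝ (fun _ : Fin (m : ℕ) => Euc n) Z,
      ∀ x, P x = ∑ m, ψ m (fun _ => x))

/-- `x ↦ φ(r⁻¹(x − a))`. -/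
def scaleFn (a : Euc n) (r : ℝ) (φ : Euc n → Y) : Euc n → Y :=
  fun x => φ (r⁻¹ • (x - a))

/-- `(T − S)_x (φ(r⁻¹(x−a)))` where `S(φ) = ∫ ⟨φ, P⟩ dℒⁿ`. -/
def jetError (T : (Euc n → Y) → ℝ) (P : Euc n → StrongDual ℝ Y) (a : Euc n) (r : ℝ)
    (φ : Euc n → Y) : ℝ :=
  T (scaleFn a r φ) - ∫ x, P x (scaleFn a r φ x)

/-- `T` is pointwise differentiable of order `k` at `a` with jet polynomial `P`. -/
def PtDiffAtWith (T : (Euc n → Y) → ℝ) (k : ℤ) (a : Euc n)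
    (P : Euc n → StrongDual ℝ Y) : Prop :=
  IsPolyDegLE k P ∧ ∀ φ : Euc n → Y, IsTest φ →
    Tendsto (fun r : ℝ => r ^ (-(k : ℝ) - n) * jetError T P a r φ) (𝓝[>] (0 : ℝ)) (𝓝 0)

/-- `T` is pointwise differentiable of order `k` at `a`. -/
def PtDiffAt (T : (Euc n → Y) → ℝ) (k : ℤ) (a : Euc n) : Prop :=
  ∃ P, PtDiffAtWith T k a P

/-- `T` is pointwise differentiable of order `(k,α)` at `a` with jet polynomial `P`:
`limsup_{r→0+} r^{−k−α−n} |(T−S)_x(φ(r⁻¹(x−a)))| < ∞` for each test function `φ`. -/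
def PtDiffHolderAtWith (T : (Euc n → Y) → ℝ) (k : ℤ) (α : ℝ) (a : Euc n)
    (P : Euc n → StrongDual ℝ Y) : Prop :=
  IsPolyDegLE k P ∧ ∀ φ : Euc n → Y, IsTest φ → ∃ M δ : ℝ, 0 < δ ∧
    ∀ r : ℝ, 0 < r → r ≤ δ → |jetError T P a r φ| ≤ M * r ^ ((k : ℝ) + α + n)

/-- `T` is pointwise differentiable of order `(k,α)` at `a`. -/
def PtDiffHolderAt (T : (Euc n → Y) → ℝ) (k : ℤ) (α : ℝ) (a : Euc n) : Prop :=
  ∃ P, PtDiffHolderAtWith T k α a P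

/-- `φ ∈ 𝒟_{B(0,1)}(ℝⁿ,Y)` with `ν^i_{B(0,1)}(φ) = sup_x ‖D^i φ(x)‖ ≤ 1`. -/
def NuUnit (i : ℕ) (φ : Euc n → Y) : Prop :=
  IsTest φ ∧ tsupport φ ⊆ closedBall (0 : Euc n) 1 ∧ ∀ x, ‖iteratedFDeriv ℝ i φ x‖ ≤ 1

/-- `T` is `ν^i_{B(0,1)}`-pointwise differentiable of order `k` at `a` with jet `P`. -/
def NuPtDiffAtWith (i : ℕ) (T : (Euc n → Y) → ℝ) (k : ℤ) (a : Euc n)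
    (P : Euc n → StrongDual ℝ Y) : Prop :=
  IsPolyDegLE k P ∧ ∀ ε : ℝ, 0 < ε → ∃ δ : ℝ, 0 < δ ∧
    ∀ r : ℝ, 0 < r → r ≤ δ → ∀ φ : Euc n → Y, NuUnit i φ →
      |jetError T P a r φ| ≤ ε * r ^ ((k : ℝ) + n)

/-- `T` is `ν^i_{B(0,1)}`-pointwise differentiable of order `k` at `a`. -/
def NuPtDiffAt (i : ℕ) (T : (Euc n → Y) → ℝ) (k : ℤ) (a : Euc n) : Prop :=
  ∃ P, NuPtDiffAtWith i T k a P

/-- `T` is `ν^i_{B(0,1)}`-pointwise differentiable of order `(k,α)` at `a` with jet `P`. -/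
def NuPtDiffHolderAtWith (i : ℕ) (T : (Euc n → Y) → ℝ) (k : ℤ) (α : ℝ) (a : Euc n)
    (P : Euc n → StrongDual ℝ Y) : Prop :=
  IsPolyDegLE k P ∧ ∃ M δ : ℝ, 0 < δ ∧
    ∀ r : ℝ, 0 < r → r ≤ δ → ∀ φ : Euc n → Y, NuUnit i φ →
      |jetError T P a r φ| ≤ M * r ^ ((k : ℝ) + α + n)

/-- `T` is `ν^i_{B(0,1)}`-pointwise differentiable of order `(k,α)` at `a`. -/
def NuPtDiffHolderAt (i : ℕ) (T : (Euc n → Y) → ℝ) (k : ℤ) (α : ℝ) (a : Euc n) : Prop :=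
  ∃ P, NuPtDiffHolderAtWith i T k α a P

open Classical in
/-- The `m`-th order pointwise differential `pt D^m T(a)`, the `m`-th derivative at `a`
of the (unique) `m`-jet polynomial of `T` at `a` (junk value `0` if it does not exist). -/
def ptD (T : (Euc n → Y) → ℝ) (m : ℕ) (a : Euc n) :
    ContinuousMultilinearMap ℝ (fun _ : Fin m => Euc n) (StrongDual ℝ Y) :=
  if h : PtDiffAt T (m : ℤ) a then iteratedFDeriv ℝ m (Classical.choose h) a else 0

/-- A function of class `(k, α)`: of class `C^k` with `D^k f` locally Hölder
continuous with exponent `α`. -/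
def IsClassKAlpha (k : ℕ) (α : ℝ) (f : Euc n → Z) : Prop :=
  ContDiff ℝ (k : ℕ∞) f ∧ ∀ x : Euc n, ∃ C r : ℝ, 0 < r ∧
    ∀ y ∈ ball x r, ∀ z ∈ ball x r,
      ‖iteratedFDeriv ℝ k f y - iteratedFDeriv ℝ k f z‖ ≤ C * ‖y - z‖ ^ α

/-- `Δ` is a sequentially dense set of test functions: every test function is the limit of
a sequence in `Δ` with supports in a common compact set and all derivatives converging
uniformly. -/
def SeqDense (Δ : Set (Euc n → Y)) : Prop :=
  (∀ φ ∈ Δ, IsTest φ) ∧ ∀ θ : Euc n → Y, IsTest θ →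
    ∃ φ : ℕ → Euc n → Y, (∀ j, φ j ∈ Δ) ∧
      (∃ K : Set (Euc n), IsCompact K ∧ ∀ j, tsupport (φ j) ⊆ K) ∧
      ∀ m : ℕ, TendstoUniformly (fun j => iteratedFDeriv ℝ m (φ j)) (iteratedFDeriv ℝ m θ) atTop

end Defs

namespace Stmt12Aux

theorem coe_nat_le_top (m : ℕ) : (m : WithTop ℕ∞) ≤ ((⊤ : ℕ∞) : WithTop ℕ∞) := by
  exact_mod_cast le_top

theorem iteratedFDeriv_comp_add {E F : Type*} [NormedAddCommGroup E] [NormedSpace ℝ E]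
    [NormedAddCommGroup F] [NormedSpace ℝ F]
    (g : E → F) (hg : ContDiff ℝ (⊤ : ℕ∞) g) (b : E) (m : ℕ) :
    ∀ x, iteratedFDeriv ℝ m (fun y => g (b + y)) x = iteratedFDeriv ℝ m g (b + x) := by
  induction m with
  | zero => intro x; ext v; simp [iteratedFDeriv_zero_apply]
  | succ m ih =>
    intro x
    ext v
    have hm : (m : WithTop ℕ∞) < ((⊤ : ℕ∞) : WithTop ℕ∞) := by
      exact_mod_cast WithTop.coe_lt_coe.2 (WithTop.coe_lt_top m)
    have hdiff : Differentiable ℝ (iteratedFDeriv ℝ m g) :=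
      hg.differentiable_iteratedFDeriv hm
    have h1 : iteratedFDeriv ℝ m (fun y => g (b + y)) = fun y => iteratedFDeriv ℝ m g (b + y) :=
      funext ih
    rw [iteratedFDeriv_succ_apply_left, iteratedFDeriv_succ_apply_left, h1]
    have h2 : HasFDerivAt (fun y => iteratedFDeriv ℝ m g (b + y))
        (fderiv ℝ (iteratedFDeriv ℝ m g) (b + x)) x := by
      have h3 := ((hdiff (b + x)).hasFDerivAt).comp x ((hasFDerivAt_id x).const_add b)
      exact h3
    rw [h2.fderiv]

theorem coeffs_vanish (D k : ℕ) (c : ℕ → ℝ)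
    (h : Filter.Tendsto (fun r : ℝ => (r ^ k)⁻¹ * ∑ i ∈ Finset.range D, r ^ i * c i)
      (𝓝[>] (0:ℝ)) (𝓝 0)) :
    ∀ m, m ≤ k → m < D → c m = 0 := by
  intro m
  induction m using Nat.strong_induction_on with
  | _ m ih =>
    intro hmk hmD
    have key : ∀ r : ℝ, 0 < r →
        r ^ (k - m) * ((r ^ k)⁻¹ * ∑ i ∈ Finset.range D, r ^ i * c i)
          = ∑ i ∈ Finset.Ico m D, r ^ (i - m) * c i := by
      intro r hr
      have hr0 : r ≠ 0 := ne_of_gt hr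
      have hsplit : ∑ i ∈ Finset.range D, r ^ i * c i
          = ∑ i ∈ Finset.Ico m D, r ^ i * c i := by
        rw [Finset.range_eq_Ico, ← Finset.sum_Ico_consecutive _ (Nat.zero_le m) (le_of_lt hmD)]
        have hz : ∑ i ∈ Finset.Ico 0 m, r ^ i * c i = 0 := by
          apply Finset.sum_eq_zero
          intro i hi
          rw [Finset.mem_Ico] at hi
          rw [ih i hi.2 (hi.2.le.trans hmk) (hi.2.trans hmD), mul_zero]
        rw [hz, zero_add]
      rw [hsplit, Finset.mul_sum, Finset.mul_sum]
      apply Finset.sum_congr rfl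
      intro i hi
      rw [Finset.mem_Ico] at hi
      have h1 : r ^ i = r ^ m * r ^ (i - m) := by
        rw [← pow_add]; congr 1; omega
      have h2 : r ^ k = r ^ (k - m) * r ^ m := by
        rw [← pow_add]; congr 1; omega
      rw [h1, h2]
      field_simp
    have t1 : Filter.Tendsto (fun r : ℝ => ∑ i ∈ Finset.Ico m D, r ^ (i - m) * c i)
        (𝓝[>] (0:ℝ)) (𝓝 0) := by
      have t0 : Filter.Tendsto
          (fun r : ℝ => r ^ (k - m) * ((r ^ k)⁻¹ * ∑ i ∈ Finset.range D, r ^ i * c i))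
          (𝓝[>] (0:ℝ)) (𝓝 ((0:ℝ) ^ (k - m) * 0)) :=
        (((continuous_pow (k - m)).tendsto 0).mono_left nhdsWithin_le_nhds).mul h
      rw [mul_zero] at t0
      apply t0.congr'
      filter_upwards [self_mem_nhdsWithin] with r hr using key r hr
    have t2 : Filter.Tendsto (fun r : ℝ => ∑ i ∈ Finset.Ico m D, r ^ (i - m) * c i)
        (𝓝[>] (0:ℝ)) (𝓝 (c m)) := by
      have hc : Continuous (fun r : ℝ => ∑ i ∈ Finset.Ico m D, r ^ (i - m) * c i) := by
        apply continuous_finset_sum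
        intro i _
        exact (continuous_pow _).mul continuous_const
      have h0 : ∑ i ∈ Finset.Ico m D, (0:ℝ) ^ (i - m) * c i = c m := by
        rw [Finset.sum_eq_single m]
        · simp
        · intro i hi hne
          rw [Finset.mem_Ico] at hi
          have : i - m ≠ 0 := by omega
          simp [zero_pow this]
        · intro habs; exact absurd (Finset.mem_Ico.2 ⟨le_refl m, hmD⟩) habs
      have := (hc.tendsto 0).mono_left (nhdsWithin_le_nhds (s := Set.Ioi (0:ℝ)))
      rwa [h0] at this
    exact tendsto_nhds_unique t2 t1

theorem integrable_mul_of_support {n : ℕ} {g Q : Euc n → ℝ} {K : Set (Euc n)}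
    (hK : IsCompact K) (hg : Continuous g) (hgs : tsupport g ⊆ K) (hQ : Continuous Q) :
    Integrable (fun y => g y * Q y) := by
  apply Continuous.integrable_of_hasCompactSupport (hg.mul hQ)
  have hgc : HasCompactSupport g := hK.of_isClosed_subset (isClosed_tsupport g) hgs
  exact hgc.mul_right

theorem tendsto_integral_mul {n : ℕ} {Q θ : Euc n → ℝ}
    {φ : ℕ → Euc n → ℝ} {K : Set (Euc n)}
    (hQ : Continuous Q) (hK : IsCompact K)
    (hθc : Continuous θ) (hθs : tsupport θ ⊆ K)
    (hφc : ∀ j, Continuous (φ j)) (hφs : ∀ j, tsupport (φ j) ⊆ K)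
    (hconv : TendstoUniformly φ θ atTop) :
    Filter.Tendsto (fun j => ∫ y, φ j y * Q y) atTop (𝓝 (∫ y, θ y * Q y)) := by
  obtain ⟨M, hM⟩ := hK.exists_bound_of_continuousOn hQ.continuousOn
  set M' := max M 0 with hM'
  have hM0 : 0 ≤ M' := le_max_right _ _
  set V := (volume K).toReal with hV'
  have hV : 0 ≤ V := ENNReal.toReal_nonneg
  rw [Metric.tendsto_atTop]
  intro ε hε
  set ε' := ε / (M' * V + 1) with hε'
  have hAnn : (0:ℝ) ≤ M' * V := mul_nonneg hM0 hV
  have hε'pos : 0 < ε' := div_pos hε (by linarith)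
  rw [Metric.tendstoUniformly_iff] at hconv
  obtain ⟨N, hN⟩ := (hconv ε' hε'pos).exists_forall_of_atTop
  refine ⟨N, fun j hj => ?_⟩
  have hintj := integrable_mul_of_support hK (hφc j) (hφs j) hQ
  have hintθ := integrable_mul_of_support hK hθc hθs hQ
  have hd : dist (∫ y, φ j y * Q y) (∫ y, θ y * Q y) = ‖∫ y, (φ j y - θ y) * Q y‖ := by
    rw [dist_eq_norm, ← integral_sub hintj hintθ]
    congr 1
    apply integral_congr_ae
    filter_upwards with y
    ring
  rw [hd]
  have hzero : ∀ x, x ∉ K → (φ j x - θ x) * Q x = 0 := by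
    intro x hx
    have h1 : φ j x = 0 := image_eq_zero_of_notMem_tsupport (fun hmem => hx (hφs j hmem))
    have h2 : θ x = 0 := image_eq_zero_of_notMem_tsupport (fun hmem => hx (hθs hmem))
    rw [h1, h2]; ring
  rw [← setIntegral_eq_integral_of_forall_compl_eq_zero hzero]
  have hb : ‖∫ y in K, (φ j y - θ y) * Q y‖ ≤ ε' * M' * V := by
    have := norm_setIntegral_le_of_norm_le_const (μ := volume) (s := K)
      (f := fun y => (φ j y - θ y) * Q y) (C := ε' * M') hK.measure_lt_top ?_
    · simpa [hV', mul_assoc, measureReal_def] using this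
    · intro x hx
      have h1 : ‖(φ j x - θ x) * Q x‖ = ‖φ j x - θ x‖ * ‖Q x‖ := norm_mul _ _
      rw [h1]
      apply mul_le_mul ?_ ?_ (norm_nonneg _) hε'pos.le
      · have h2 := hN j hj x
        rw [dist_eq_norm] at h2
        rw [norm_sub_rev]
        exact h2.le
      · exact le_trans (hM x hx) (le_max_left _ _)
  refine lt_of_le_of_lt hb ?_
  have hεq : ε' * M' * V = ε * (M' * V) / (M' * V + 1) := by
    rw [hε']; ring
  rw [hεq, div_lt_iff₀ (by linarith)]
  nlinarith

variable {n D : ℕ}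

/-- restriction of `ψ t.1` to the coordinates in `t.2`, others fixed equal to `a`. -/
def chiF (ψ : (m : Fin D) → ContinuousMultilinearMap ℝ (fun _ : Fin (m : ℕ) => Euc n) ℝ)
    (a : Euc n) (t : (m : Fin D) × Finset (Fin (m : ℕ))) :
    ContinuousMultilinearMap ℝ (fun _ : Fin t.2.card => Euc n) ℝ :=
  (ψ t.1).restr t.2 rfl a

/-- the degree-`i` homogeneous part of `x ↦ P (a + x)`. -/
def QF (ψ : (m : Fin D) → ContinuousMultilinearMap ℝ (fun _ : Fin (m : ℕ) => Euc n) ℝ)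
    (a : Euc n) (i : ℕ) (z : Euc n) : ℝ :=
  ∑ t ∈ Finset.univ.filter
      (fun t : (m : Fin D) × Finset (Fin (m : ℕ)) => t.2.card = i),
    chiF ψ a t (fun _ => z)

theorem chiF_diag (ψ : (m : Fin D) → ContinuousMultilinearMap ℝ (fun _ : Fin (m : ℕ) => Euc n) ℝ)
    (a : Euc n) (t : (m : Fin D) × Finset (Fin (m : ℕ))) (z : Euc n) :
    chiF ψ a t (fun _ => z) = ψ t.1 (t.2.piecewise (fun _ => z) (fun _ => a)) := by
  have e : (fun j => if _ : j ∈ t.2 then z else a) = t.2.piecewise (fun _ => z) (fun _ => a) := by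
    funext j
    by_cases h : j ∈ t.2 <;> simp [Finset.piecewise, h]
  show (ψ t.1) (fun j => if _ : j ∈ t.2 then z else a) = _
  rw [e]

theorem sum_rep (ψ : (m : Fin D) → ContinuousMultilinearMap ℝ (fun _ : Fin (m : ℕ) => Euc n) ℝ)
    (a : Euc n) (z : Euc n) :
    (∑ m : Fin D, ψ m (fun _ => a + z)) = ∑ i ∈ Finset.range D, QF ψ a i z := by
  classical
  have step1 : ∀ m : Fin D, ψ m (fun _ => a + z)
      = ∑ s : Finset (Fin (m : ℕ)), ψ m (s.piecewise (fun _ => z) (fun _ => a)) := by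
    intro m
    have e1 : (fun _ : Fin (m : ℕ) => a + z) = (fun _ => z) + (fun _ => a) := by
      funext i
      simp [add_comm]
    rw [e1, (ψ m).map_add_univ]
  calc (∑ m : Fin D, ψ m (fun _ => a + z))
      = ∑ m : Fin D, ∑ s : Finset (Fin (m : ℕ)),
          ψ m (s.piecewise (fun _ => z) (fun _ => a)) := by
        exact Finset.sum_congr rfl (fun m _ => step1 m)
    _ = ∑ t : (m : Fin D) × Finset (Fin (m : ℕ)),
          chiF ψ a t (fun _ => z) := by
        rw [← Finset.univ_sigma_univ, Finset.sum_sigma]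
        exact Finset.sum_congr rfl (fun m _ => Finset.sum_congr rfl
          (fun s _ => (chiF_diag ψ a ⟨m, s⟩ z).symm))
    _ = ∑ i ∈ Finset.range D, QF ψ a i z := by
        exact (Finset.sum_fiberwise_of_maps_to (fun t _ => by
          rw [Finset.mem_range]
          calc t.2.card ≤ Fintype.card (Fin (t.1 : ℕ)) := Finset.card_le_univ t.2
            _ = (t.1 : ℕ) := Fintype.card_fin _
            _ < D := t.1.isLt)
          (fun t => chiF ψ a t (fun _ => z))).symm

theorem QF_smul (ψ : (m : Fin D) → ContinuousMultilinearMap ℝ (fun _ : Fin (m : ℕ) => Euc n) ℝ)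
    (a : Euc n) (i : ℕ) (r : ℝ) (z : Euc n) :
    QF ψ a i (r • z) = r ^ i * QF ψ a i z := by
  unfold QF
  rw [Finset.mul_sum]
  apply Finset.sum_congr rfl
  intro t ht
  rw [Finset.mem_filter] at ht
  have h1 : (fun _ : Fin t.2.card => r • z)
      = (fun j : Fin t.2.card => r • (fun _ : Fin t.2.card => z) j) := rfl
  rw [h1, (chiF ψ a t).map_smul_univ (fun _ => r) (fun _ => z)]
  simp [ht.2, smul_eq_mul]

theorem QF_continuous
    (ψ : (m : Fin D) → ContinuousMultilinearMap ℝ (fun _ : Fin (m : ℕ) => Euc n) ℝ)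
    (a : Euc n) (i : ℕ) : Continuous (QF ψ a i) := by
  apply continuous_finset_sum
  intro t _
  exact (chiF ψ a t).coe_continuous.comp (continuous_pi (fun _ => continuous_id))

/-- The diagonal continuous linear map. -/
def diagCLM (n c : ℕ) : Euc n →L[ℝ] (Fin c → Euc n) :=
  ContinuousLinearMap.pi fun _ => ContinuousLinearMap.id ℝ _

theorem smooth_diag_comp {c : ℕ} (χ : ContinuousMultilinearMap ℝ (fun _ : Fin c => Euc n) ℝ) :
    ContDiff ℝ (⊤ : ℕ∞) (fun z : Euc n => χ (fun _ => z)) :=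
  χ.contDiff.comp (diagCLM n c).contDiff

theorem iteratedFDeriv_multilinear_diag_zero {c m : ℕ}
    (χ : ContinuousMultilinearMap ℝ (fun _ : Fin c => Euc n) ℝ) (hm : m < c) :
    iteratedFDeriv ℝ m (fun z : Euc n => χ (fun _ => z)) 0 = 0 := by
  have hcomp : (fun z : Euc n => χ (fun _ => z)) = ⇑χ ∘ ⇑(diagCLM n c) := rfl
  rw [hcomp, ContinuousLinearMap.iteratedFDeriv_comp_right (diagCLM n c) χ.contDiff 0
    (i := m) le_top]
  have hzero : iteratedFDeriv ℝ m ⇑χ (diagCLM n c 0) = 0 := by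
    rw [map_zero]
    refine norm_le_zero_iff.1 ?_
    have hb := χ.norm_iteratedFDeriv_le m 0
    have h0 : ‖(0 : Fin c → Euc n)‖ ^ (Fintype.card (Fin c) - m) = 0 := by
      rw [norm_zero]
      apply zero_pow
      rw [Fintype.card_fin]
      omega
    rw [h0, mul_zero] at hb
    exact hb
  rw [hzero]
  ext v
  simp

theorem iteratedFDeriv_chi_term_zero {c m : ℕ} (a : Euc n)
    (χ : ContinuousMultilinearMap ℝ (fun _ : Fin c => Euc n) ℝ) (hm : m < c) :
    iteratedFDeriv ℝ m (fun x : Euc n => χ (fun _ => x - a)) a = 0 := by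
  have he : (fun x : Euc n => χ (fun _ => x - a))
      = fun x : Euc n => (fun z : Euc n => χ (fun _ => z)) (-a + x) := by
    funext x
    simp [neg_add_eq_sub]
  rw [he, iteratedFDeriv_comp_add _ (smooth_diag_comp χ) (-a) m a, neg_add_cancel]
  exact iteratedFDeriv_multilinear_diag_zero χ hm

theorem QF_shift_smooth
    (ψ : (m : Fin D) → ContinuousMultilinearMap ℝ (fun _ : Fin (m : ℕ) => Euc n) ℝ)
    (a : Euc n) (i : ℕ) : ContDiff ℝ (⊤ : ℕ∞) (fun x : Euc n => QF ψ a i (x - a)) := by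
  apply ContDiff.sum
  intro t _
  exact (smooth_diag_comp (chiF ψ a t)).comp (contDiff_id.sub contDiff_const)

end Stmt12Aux


theorem Stmt12Aux.main (n k D : ℕ) (P : Euc n → ℝ)
    (Δ : Set (Euc n → ℝ)) (hΔ : SeqDense Δ) (a : Euc n)
    (H : ∀ φ ∈ Δ, Filter.Tendsto
      (fun r : ℝ => r ^ (-(k : ℝ) - n) * ∫ x, φ (r⁻¹ • (x - a)) * P x)
      (nhdsWithin 0 (Set.Ioi (0 : ℝ))) (nhds 0))
    (ψ : (m : Fin D) → ContinuousMultilinearMap ℝ (fun _ : Fin (m : ℕ) => Euc n) ℝ)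
    (hψ : ∀ x, P x = ∑ m : Fin D, ψ m (fun _ => x)) :
    ∀ m : ℕ, m ≤ k → iteratedFDeriv ℝ m P a = 0 := by
  classical
  -- representation of `P` around `a`
  have hrep : ∀ z, P (a + z) = ∑ i ∈ Finset.range D, Stmt12Aux.QF ψ a i z := by
    intro z
    rw [hψ (a + z)]
    exact Stmt12Aux.sum_rep ψ a z
  -- coefficients vanish against every `φ ∈ Δ`
  have hcoeff : ∀ φ ∈ Δ, ∀ i, i ≤ k → i < D →
      ∫ y, φ y * Stmt12Aux.QF ψ a i y = 0 := by
    intro φ hφ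
    have hφt : IsTest φ := hΔ.1 φ hφ
    have hint : ∀ i, Integrable (fun y => φ y * Stmt12Aux.QF ψ a i y) := by
      intro i
      exact Continuous.integrable_of_hasCompactSupport
        (hφt.1.continuous.mul (Stmt12Aux.QF_continuous ψ a i)) hφt.2.mul_right
    refine Stmt12Aux.coeffs_vanish D k (fun i => ∫ y, φ y * Stmt12Aux.QF ψ a i y) ?_
    apply (H φ hφ).congr'
    filter_upwards [self_mem_nhdsWithin] with r hr
    have hr0 : (0:ℝ) < r := hr
    have h1 : (∫ x, φ (r⁻¹ • (x - a)) * P x) = ∫ z, φ (r⁻¹ • z) * P (a + z) := by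
      rw [← MeasureTheory.integral_sub_right_eq_self
        (μ := volume) (fun z => φ (r⁻¹ • z) * P (a + z)) a]
      refine integral_congr_ae (Filter.Eventually.of_forall fun x => ?_)
      show φ (r⁻¹ • (x - a)) * P x = φ (r⁻¹ • (x - a)) * P (a + (x - a))
      rw [show a + (x - a) = x from by abel]
    have h2 : (∫ z, φ (r⁻¹ • z) * P (a + z)) = r ^ n * ∫ y, φ y * P (a + r • y) := by
      have hs := MeasureTheory.Measure.integral_comp_inv_smul_of_nonneg
        (volume : Measure (Euc n)) (fun y => φ y * P (a + r • y)) hr0.le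
      rw [finrank_euclideanSpace_fin, smul_eq_mul] at hs
      rw [← hs]
      refine integral_congr_ae (Filter.Eventually.of_forall fun z => ?_)
      show φ (r⁻¹ • z) * P (a + z) = φ (r⁻¹ • z) * P (a + r • (r⁻¹ • z))
      rw [smul_inv_smul₀ hr0.ne']
    have h3 : (∫ y, φ y * P (a + r • y))
        = ∑ i ∈ Finset.range D, r ^ i * ∫ y, φ y * Stmt12Aux.QF ψ a i y := by
      have e : ∀ y, φ y * P (a + r • y)
          = ∑ i ∈ Finset.range D, r ^ i * (φ y * Stmt12Aux.QF ψ a i y) := by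
        intro y
        rw [hrep (r • y), Finset.mul_sum]
        exact Finset.sum_congr rfl fun i _ => by rw [Stmt12Aux.QF_smul]; ring
      calc (∫ y, φ y * P (a + r • y))
          = ∫ y, ∑ i ∈ Finset.range D, r ^ i * (φ y * Stmt12Aux.QF ψ a i y) :=
            integral_congr_ae (Filter.Eventually.of_forall e)
        _ = ∑ i ∈ Finset.range D, ∫ y, r ^ i * (φ y * Stmt12Aux.QF ψ a i y) :=
            integral_finset_sum _ (fun i _ => (hint i).const_mul _)
        _ = ∑ i ∈ Finset.range D, r ^ i * ∫ y, φ y * Stmt12Aux.QF ψ a i y :=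
            Finset.sum_congr rfl fun i _ => integral_const_mul _ _
    rw [h1, h2, h3]
    have hrpow : r ^ (-(k:ℝ) - n) = (r ^ (k + n))⁻¹ := by
      rw [show -(k:ℝ) - n = -((k + n : ℕ) : ℝ) from by push_cast; ring,
        Real.rpow_neg hr0.le, Real.rpow_natCast]
    rw [hrpow, pow_add]
    have hk0 : r ^ k ≠ 0 := pow_ne_zero _ hr0.ne'
    have hn0 : r ^ n ≠ 0 := pow_ne_zero _ hr0.ne'
    field_simp
  -- the homogeneous parts of low degree vanish identically
  have hQ0 : ∀ i, i ≤ k → i < D → ∀ z, Stmt12Aux.QF ψ a i z = 0 := by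
    intro i hik hiD
    have hall : ∀ θ : Euc n → ℝ, IsTest θ → ∫ y, θ y * Stmt12Aux.QF ψ a i y = 0 := by
      intro θ hθ
      obtain ⟨φs, hφsΔ, ⟨K, hK, hKs⟩, hconv⟩ := hΔ.2 θ hθ
      have hφt : ∀ j, IsTest (φs j) := fun j => hΔ.1 _ (hφsΔ j)
      have keyd : ∀ (f : Euc n → ℝ) (x : Euc n),
          (continuousMultilinearCurryFin0 ℝ (Euc n) ℝ) (iteratedFDeriv ℝ 0 f x) = f x := by
        intro f x
        simp [iteratedFDeriv_zero_apply]
      have hconv0 : TendstoUniformly (fun j => φs j) θ atTop := by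
        have h0 := hconv 0
        rw [Metric.tendstoUniformly_iff] at h0 ⊢
        intro ε hε
        filter_upwards [h0 ε hε] with j hj x
        have hx := hj x
        have : dist (θ x) (φs j x)
            = dist (iteratedFDeriv ℝ 0 θ x) (iteratedFDeriv ℝ 0 (φs j) x) := by
          rw [← (continuousMultilinearCurryFin0 ℝ (Euc n) ℝ).dist_map
            (iteratedFDeriv ℝ 0 θ x) (iteratedFDeriv ℝ 0 (φs j) x), keyd, keyd]
        rw [this]
        exact hx
      have hθK : tsupport θ ⊆ K := by
        apply closure_minimal ?_ hK.isClosed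
        intro x hx
        by_contra hxK
        apply hx
        have hlim : Filter.Tendsto (fun j => φs j x) atTop (𝓝 (θ x)) := hconv0.tendsto_at x
        have hzs : ∀ j, φs j x = 0 :=
          fun j => image_eq_zero_of_notMem_tsupport (fun hmem => hxK (hKs j hmem))
        have hlim0 : Filter.Tendsto (fun j => φs j x) atTop (𝓝 0) := by
          simp only [hzs]
          exact tendsto_const_nhds
        exact tendsto_nhds_unique hlim hlim0
      have hlim := Stmt12Aux.tendsto_integral_mul (Stmt12Aux.QF_continuous ψ a i) hK
        hθ.1.continuous hθK (fun j => (hφt j).1.continuous) hKs hconv0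
      have hz : (fun j => ∫ y, φs j y * Stmt12Aux.QF ψ a i y) = fun _ => (0:ℝ) := by
        funext j
        exact hcoeff _ (hφsΔ j) i hik hiD
      rw [hz] at hlim
      exact (tendsto_nhds_unique tendsto_const_nhds hlim).symm
    have hQc := Stmt12Aux.QF_continuous ψ a i
    have hae : ∀ᵐ z : Euc n, Stmt12Aux.QF ψ a i z = 0 := by
      apply ae_eq_zero_of_integral_contDiff_smul_eq_zero (hQc.locallyIntegrable)
      intro g hg hgs
      simp only [smul_eq_mul]
      exact hall g ⟨hg, hgs⟩
    have heq : Stmt12Aux.QF ψ a i = fun _ => 0 :=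
      (hQc.ae_eq_iff_eq volume continuous_const).1 hae
    intro z
    exact congrFun heq z
  -- representation of `P` with only high-degree parts
  have hPrep : P = fun x => ∑ i ∈ (Finset.range D).filter (fun i => ¬ i ≤ k),
      Stmt12Aux.QF ψ a i (x - a) := by
    funext x
    have h0 := hrep (x - a)
    rw [show a + (x - a) = x from by abel] at h0
    rw [h0, ← Finset.sum_filter_add_sum_filter_not (Finset.range D) (fun i => i ≤ k)]
    have hz : ∑ i ∈ (Finset.range D).filter (fun i => i ≤ k),
        Stmt12Aux.QF ψ a i (x - a) = 0 := by
      apply Finset.sum_eq_zero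
      intro i hi
      rw [Finset.mem_filter, Finset.mem_range] at hi
      exact hQ0 i hi.2 hi.1 _
    rw [hz, zero_add]
  intro m hmk
  rw [hPrep]
  have hsum := iteratedFDeriv_sum (𝕜 := ℝ)
    (f := fun i => (fun x : Euc n => Stmt12Aux.QF ψ a i (x - a)))
    (u := (Finset.range D).filter (fun i => ¬ i ≤ k)) (i := m)
    (fun i _ => (Stmt12Aux.QF_shift_smooth ψ a i).of_le (Stmt12Aux.coe_nat_le_top m))
  have hsum' := congrFun hsum a
  simp only [Finset.sum_apply] at hsum'
  rw [show (fun x : Euc n => ∑ i ∈ (Finset.range D).filter (fun i => ¬ i ≤ k),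
      Stmt12Aux.QF ψ a i (x - a))
      = (∑ i ∈ (Finset.range D).filter (fun i => ¬ i ≤ k),
        (fun x : Euc n => Stmt12Aux.QF ψ a i (x - a)) ·) from by
    funext x; simp]
  rw [hsum']
  apply Finset.sum_eq_zero
  intro i hi
  rw [Finset.mem_filter] at hi
  have hik : k < i := by omega
  -- each summand is a finite sum of `chi` terms
  have hQdef : (fun x : Euc n => Stmt12Aux.QF ψ a i (x - a))
      = fun x : Euc n => ∑ t ∈ Finset.univ.filter
          (fun t : (m' : Fin D) × Finset (Fin (m' : ℕ)) => t.2.card = i),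
        Stmt12Aux.chiF ψ a t (fun _ => x - a) := rfl
  rw [hQdef]
  have hsum2 := iteratedFDeriv_sum (𝕜 := ℝ)
    (f := fun t : (m' : Fin D) × Finset (Fin (m' : ℕ)) =>
      (fun x : Euc n => Stmt12Aux.chiF ψ a t (fun _ => x - a)))
    (u := Finset.univ.filter
      (fun t : (m' : Fin D) × Finset (Fin (m' : ℕ)) => t.2.card = i)) (i := m)
    (fun t _ => ((Stmt12Aux.smooth_diag_comp (Stmt12Aux.chiF ψ a t)).comp
      (contDiff_id.sub contDiff_const)).of_le (Stmt12Aux.coe_nat_le_top m))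
  have hsum2' := congrFun hsum2 a
  simp only [Finset.sum_apply] at hsum2'
  rw [show (fun x : Euc n => ∑ t ∈ Finset.univ.filter
      (fun t : (m' : Fin D) × Finset (Fin (m' : ℕ)) => t.2.card = i),
      Stmt12Aux.chiF ψ a t (fun _ => x - a))
      = (∑ t ∈ Finset.univ.filter
        (fun t : (m' : Fin D) × Finset (Fin (m' : ℕ)) => t.2.card = i),
        (fun x : Euc n => Stmt12Aux.chiF ψ a t (fun _ => x - a)) ·) from by
    funext x; simp]
  rw [hsum2']
  apply Finset.sum_eq_zero
  intro t ht
  rw [Finset.mem_filter] at ht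
  exact Stmt12Aux.iteratedFDeriv_chi_term_zero a (Stmt12Aux.chiF ψ a t) (by omega)

/-- Uniqueness lemma for jets. -/
theorem stmt12 (n k : ℕ) (P : Euc n → ℝ) (hP : ∃ d : ℕ, IsPolyDegLE (d : ℤ) P)
    (Δ : Set (Euc n → ℝ)) (hΔ : SeqDense Δ) (a : Euc n)
    (H : ∀ φ ∈ Δ, Filter.Tendsto
      (fun r : ℝ => r ^ (-(k : ℝ) - n) * ∫ x, φ (r⁻¹ • (x - a)) * P x)
      (nhdsWithin 0 (Set.Ioi (0 : ℝ))) (nhds 0)) :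
    ∀ m : ℕ, m ≤ k → iteratedFDeriv ℝ m P a = 0 := by
  obtain ⟨d, hPd⟩ := hP
  rcases hPd with ⟨hneg, -⟩ | ⟨-, ψ, hψ⟩
  · exact absurd hneg (by simp)
  exact Stmt12Aux.main n k ((d : ℤ).toNat + 1) P Δ hΔ a H ψ hψ
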